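/- If G is a maximal outerplanar graph of order n ≥ 6, then G has a diagonal {i, j} that cuts off exactly 4, 5, or 6 outer edges of G; that is, there exist adjacent vertices i and j of G with (j − i) mod n ∈ {4, 5, 6}. -/

import Mathlib

open SimpleGraph

/-- `G` is (the representation of) a maximal outerplanar graph on the convex polygon
`0, 1, …, n-1`: it contains all outer edges `{i, (i+1) mod n}`, no two of its edges
cross, and it has exactly `2n - 3` edges. -/
def IsMop {n : ℕ} [NeZero n] (G : SimpleGraph (Fin n)) : Prop :=
  (∀ i : Fin n, G.Adj i (i + 1)) ∧
  (∀ a b c d : Fin n, a < b → b < c → c < d → G.Adj a c → ¬ G.Adj b d) ∧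
  G.edgeSet.ncard = 2 * n - 3

/-- An edge of `G` that is not an outer edge of the polygon. -/
def IsDiagonal {n : ℕ} [NeZero n] (G : SimpleGraph (Fin n)) (u v : Fin n) : Prop :=
  G.Adj u v ∧ v ≠ u + 1 ∧ u ≠ v + 1

/-- Three pairwise adjacent vertices all of whose connecting edges are diagonals. -/
def IsInternalTriangle {n : ℕ} [NeZero n] (G : SimpleGraph (Fin n)) (a b c : Fin n) : Prop :=
  IsDiagonal G a b ∧ IsDiagonal G b c ∧ IsDiagonal G a c

/-- The number of vertices of `G` having degree `2`. -/
noncomputable def degTwoCount {n : ℕ} (G : SimpleGraph (Fin n)) : ℕ :=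
  {v : Fin n | (G.neighborSet v).ncard = 2}.ncard

/-- `D` is a dominating set of `G`. -/
def IsDomSet {V : Type*} (G : SimpleGraph V) (D : Set V) : Prop :=
  ∀ v ∉ D, ∃ u ∈ D, G.Adj u v

/-- `D` is a disjunctive dominating set (2DD-set) of `G`: every vertex outside `D`
has a neighbor in `D` or at least two vertices of `D` at distance exactly `2`. -/
def IsDisjDomSet {V : Type*} (G : SimpleGraph V) (D : Set V) : Prop :=
  ∀ v ∉ D, (∃ u ∈ D, G.Adj u v) ∨
    ∃ u ∈ D, ∃ w ∈ D, u ≠ w ∧ G.dist u v = 2 ∧ G.dist w v = 2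

/-- The domination number `γ(G)`. -/
noncomputable def domNum {V : Type*} [Fintype V] (G : SimpleGraph V) : ℕ :=
  sInf {k : ℕ | ∃ D : Set V, IsDomSet G D ∧ D.ncard = k}

/-- The disjunctive domination number `γ₂ᵈ(G)`. -/
noncomputable def disjDomNum {V : Type*} [Fintype V] (G : SimpleGraph V) : ℕ :=
  sInf {k : ℕ | ∃ D : Set V, IsDisjDomSet G D ∧ D.ncard = k}


section MopAux

variable {n : ℕ}

lemma mop_sub_val [NeZero n] (a b : Fin n) :
    (a - b).val = if b.val ≤ a.val then a.val - b.val else a.val + n - b.val := by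
  rw [Fin.sub_def]
  simp only [Fin.val_mk]
  have ha := a.isLt; have hb := b.isLt
  rcases le_or_gt b.val a.val with h | h
  · rw [if_pos h]
    have : n - b.val + a.val = n + (a.val - b.val) := by omega
    rw [this, Nat.add_mod_left, Nat.mod_eq_of_lt (by omega)]
  · rw [if_neg (by omega), Nat.mod_eq_of_lt (by omega)]
    omega

lemma mop_add_val [NeZero n] (a b : Fin n) :
    (a + b).val = if a.val + b.val < n then a.val + b.val else a.val + b.val - n := by
  rw [Fin.add_def]
  simp only [Fin.val_mk]
  have ha := a.isLt; have hb := b.isLt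
  rcases lt_or_ge (a.val + b.val) n with h | h
  · rw [if_pos h, Nat.mod_eq_of_lt h]
  · rw [if_neg (by omega)]
    rw [Nat.mod_eq_sub_mod h, Nat.mod_eq_of_lt (by omega)]

lemma mop_sub_val_zero_iff [NeZero n] (a b : Fin n) : (a - b).val = 0 ↔ a = b := by
  constructor
  · intro h
    have := mop_sub_val a b
    have ha := a.isLt; have hb := b.isLt
    apply Fin.ext
    split at this <;> omega
  · rintro rfl; simp

lemma mop_cyc_cross [NeZero n] {G : SimpleGraph (Fin n)}
    (hcross : ∀ a b c d : Fin n, a < b → b < c → c < d → G.Adj a c → ¬ G.Adj b d)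
    (a b c d : Fin n) (h1 : 0 < (b - a).val) (h2 : (b - a).val < (c - a).val)
    (h3 : (c - a).val < (d - a).val) (hac : G.Adj a c) (hbd : G.Adj b d) : False := by
  have ha := a.isLt; have hb := b.isLt; have hc := c.isLt; have hd := d.isLt
  have sb := mop_sub_val b a; have sc := mop_sub_val c a; have sd := mop_sub_val d a
  rcases le_or_gt a.val b.val with hab | hab
  · rw [if_pos hab] at sb
    rcases le_or_gt a.val c.val with hac' | hac'
    · rw [if_pos hac'] at sc
      rcases le_or_gt a.val d.val with had' | had'
      · rw [if_pos had'] at sd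
        exact hcross a b c d (by omega) (by omega) (by omega) hac hbd
      · rw [if_neg (by omega)] at sd
        exact hcross d a b c (by omega) (by omega) (by omega) hbd.symm hac
    · rw [if_neg (by omega)] at sc
      rcases le_or_gt a.val d.val with had' | had'
      · rw [if_pos had'] at sd; omega
      · rw [if_neg (by omega)] at sd
        exact hcross c d a b (by omega) (by omega) (by omega) hac.symm hbd.symm
  · rw [if_neg (by omega)] at sb
    rcases le_or_gt a.val c.val with hac' | hac'
    · rw [if_pos hac'] at sc; omega
    · rw [if_neg (by omega)] at sc
      rcases le_or_gt a.val d.val with had' | had'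
      · rw [if_pos had'] at sd; omega
      · rw [if_neg (by omega)] at sd
        exact hcross b c d a (by omega) (by omega) (by omega) hbd hac.symm

lemma mop_diag_bound (n : ℕ) (D : Finset (ℕ × ℕ))
    (hD : ∀ p ∈ D, p.1 + 2 ≤ p.2 ∧ p.2 + 1 ≤ n ∧ ¬(p.1 = 0 ∧ p.2 = n - 1))
    (hX : ∀ p ∈ D, ∀ q ∈ D, ¬(p.1 < q.1 ∧ q.1 < p.2 ∧ p.2 < q.2)) :
    D.card ≤ n - 3 := by
  induction n using Nat.strong_induction_on generalizing D with
  | _ n IH =>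
  rcases D.eq_empty_or_nonempty with rfl | hne
  · simp
  obtain ⟨p₀, hp₀, hmin⟩ := D.exists_min_image (fun p => p.2 - p.1) hne
  obtain ⟨hab, hbn, hne0⟩ := hD p₀ hp₀
  set a := p₀.1 with ha
  set b := p₀.2 with hb
  have hn4 : 4 ≤ n := by
    by_contra h
    push_neg at h
    omega
  set v := a + 1 with hv
  have hv1 : ∀ q ∈ D, q.1 ≠ v ∧ q.2 ≠ v := by
    intro q hq
    obtain ⟨hq1, hq2, _⟩ := hD q hq
    constructor
    · intro h1
      have hc := hX p₀ hp₀ q hq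
      have hm := hmin q hq
      omega
    · intro h2
      have hc := hX q hq p₀ hp₀
      omega
  set φ : ℕ → ℕ := fun x => if x < v then x else x - 1 with hφ
  have φmono : ∀ x y : ℕ, x ≠ v → y ≠ v → (x < y ↔ φ x < φ y) := by
    intro x y hx hy
    simp only [hφ]
    split_ifs <;> omega
  set D' := (D.erase p₀).image (fun p => (φ p.1, φ p.2)) with hD'
  have hinj : Set.InjOn (fun p : ℕ × ℕ => (φ p.1, φ p.2)) (D.erase p₀) := by
    intro p hp q hq hpq
    have hp' := hv1 p (Finset.mem_of_mem_erase hp)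
    have hq' := hv1 q (Finset.mem_of_mem_erase hq)
    have h1 : φ p.1 = φ q.1 := congrArg Prod.fst hpq
    have h2 : φ p.2 = φ q.2 := congrArg Prod.snd hpq
    have e1 : p.1 = q.1 := by
      by_contra hne'
      rcases lt_or_gt_of_ne hne' with h | h
      · exact absurd h1 (Nat.ne_of_lt ((φmono _ _ hp'.1 hq'.1).mp h))
      · exact absurd h1.symm (Nat.ne_of_lt ((φmono _ _ hq'.1 hp'.1).mp h))
    have e2 : p.2 = q.2 := by
      by_contra hne'
      rcases lt_or_gt_of_ne hne' with h | h
      · exact absurd h2 (Nat.ne_of_lt ((φmono _ _ hp'.2 hq'.2).mp h))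
      · exact absurd h2.symm (Nat.ne_of_lt ((φmono _ _ hq'.2 hp'.2).mp h))
    exact Prod.ext e1 e2
  have hcard : D'.card = D.card - 1 := by
    rw [hD', Finset.card_image_of_injOn hinj, Finset.card_erase_of_mem hp₀]
  have hmem : ∀ p' ∈ D', ∃ p ∈ D.erase p₀, p' = (φ p.1, φ p.2) := by
    intro p' hp'
    simp only [hD', Finset.mem_image] at hp'
    obtain ⟨p, hp, hpe⟩ := hp'
    exact ⟨p, hp, hpe.symm⟩
  have hD'cond : ∀ p' ∈ D', p'.1 + 2 ≤ p'.2 ∧ p'.2 + 1 ≤ n - 1 ∧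
      ¬(p'.1 = 0 ∧ p'.2 = n - 1 - 1) := by
    intro p' hp'
    obtain ⟨p, hp, rfl⟩ := hmem p' hp'
    have hpD := Finset.mem_of_mem_erase hp
    have hpne := Finset.ne_of_mem_erase hp
    obtain ⟨h1, h2, h3⟩ := hD p hpD
    have hpv := hv1 p hpD
    have hm := hmin p hpD
    have key : ¬(p.1 < v ∧ v < p.2 ∧ p.2 = p.1 + 2) := by
      rintro ⟨k1, k2, k3⟩
      have hpa : p.1 = a ∧ p.2 = a + 2 := by omega
      have hb2 : b = a + 2 := by omega
      exact hpne (Prod.ext hpa.1 (by omega))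
    refine ⟨?_, ?_, ?_⟩
    · simp only [hφ]
      split_ifs <;> omega
    · simp only [hφ]
      split_ifs <;> omega
    · rintro ⟨k1, k2⟩
      simp only [hφ] at k1 k2
      have hp1 : p.1 = 0 := by
        split_ifs at k1 <;> omega
      have hp2 : p.2 = n - 1 := by
        split_ifs at k2 <;> omega
      exact h3 ⟨hp1, hp2⟩
  have hD'X : ∀ p' ∈ D', ∀ q' ∈ D', ¬(p'.1 < q'.1 ∧ q'.1 < p'.2 ∧ p'.2 < q'.2) := by
    intro p' hp' q' hq'
    obtain ⟨p, hp, rfl⟩ := hmem p' hp'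
    obtain ⟨q, hq, rfl⟩ := hmem q' hq'
    have hpD := Finset.mem_of_mem_erase hp
    have hqD := Finset.mem_of_mem_erase hq
    have hpv := hv1 p hpD
    have hqv := hv1 q hqD
    rintro ⟨k1, k2, k3⟩
    exact hX p hpD q hqD ⟨(φmono _ _ hpv.1 hqv.1).mpr k1,
      (φmono _ _ hqv.1 hpv.2).mpr k2, (φmono _ _ hpv.2 hqv.2).mpr k3⟩
  have := IH (n - 1) (by omega) D' hD'cond hD'X
  have hDpos : 1 ≤ D.card := Finset.card_pos.mpr hne
  omega

lemma mop_noncross_bound [NeZero n] (hn : 3 ≤ n) (H : SimpleGraph (Fin n))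
    (hcr : ∀ a b c d : Fin n, a < b → b < c → c < d → H.Adj a c → ¬ H.Adj b d) :
    H.edgeSet.ncard ≤ 2 * n - 3 := by
  classical
  set P : Finset (Fin n × Fin n) :=
    Finset.univ.filter (fun p : Fin n × Fin n => H.Adj p.1 p.2 ∧ p.1 < p.2) with hP
  have hmemP : ∀ p : Fin n × Fin n, p ∈ P ↔ H.Adj p.1 p.2 ∧ p.1 < p.2 := by
    intro p; simp [hP]
  have hinj : Set.InjOn (fun p : Fin n × Fin n => s(p.1, p.2)) ↑P := by
    intro p hp q hq hpq
    simp only [Finset.mem_coe, hmemP] at hp hq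
    rcases Sym2.eq_iff.mp hpq with ⟨h1, h2⟩ | ⟨h1, h2⟩
    · exact Prod.ext h1 h2
    · exfalso
      have l1 := hp.2; have l2 := hq.2
      have e1 : p.1 = q.2 := h1
      have e2 : p.2 = q.1 := h2
      omega
  have himg : (fun p : Fin n × Fin n => s(p.1, p.2)) '' ↑P = H.edgeSet := by
    apply Set.eq_of_subset_of_subset
    · rintro e ⟨p, hp, rfl⟩
      simp only [Finset.mem_coe, hmemP] at hp
      exact hp.1
    · intro e he
      induction e using Sym2.ind with
      | _ x y =>
        rw [mem_edgeSet] at he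
        rcases lt_trichotomy x y with h | h | h
        · exact ⟨(x, y), by simp [hmemP, he, h], rfl⟩
        · exact absurd h he.ne
        · exact ⟨(y, x), by simp [hmemP, he.symm, h], Sym2.eq_swap⟩
  have hcount : H.edgeSet.ncard = P.card := by
    rw [← himg, Set.ncard_image_of_injOn hinj, Set.ncard_coe_finset]
  set P1 := P.filter (fun p => p.2.val = p.1.val + 1) with hP1
  set P2 := P.filter (fun p => p.1.val = 0 ∧ p.2.val = n - 1) with hP2
  set P3 := P.filter (fun p => ¬(p.2.val = p.1.val + 1) ∧ ¬(p.1.val = 0 ∧ p.2.val = n - 1))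
    with hP3
  have hsplit : P.card ≤ P1.card + P2.card + P3.card := by
    have hsub : P ⊆ P1 ∪ P2 ∪ P3 := by
      intro p hp
      simp only [Finset.mem_union, hP1, hP2, hP3, Finset.mem_filter]
      by_cases h1 : p.2.val = p.1.val + 1
      · exact Or.inl (Or.inl ⟨hp, h1⟩)
      by_cases h2 : p.1.val = 0 ∧ p.2.val = n - 1
      · exact Or.inl (Or.inr ⟨hp, h2⟩)
      · exact Or.inr ⟨hp, h1, h2⟩
    calc P.card ≤ (P1 ∪ P2 ∪ P3).card := Finset.card_le_card hsub
      _ ≤ (P1 ∪ P2).card + P3.card := Finset.card_union_le _ _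
      _ ≤ P1.card + P2.card + P3.card := by
          have := Finset.card_union_le P1 P2; omega
  have h1 : P1.card ≤ n - 1 := by
    have hmaps : ∀ p ∈ P1, (fun p : Fin n × Fin n => p.1.val) p ∈ Finset.range (n - 1) := by
      intro p hp
      simp only [hP1, Finset.mem_filter] at hp
      have := p.2.isLt
      simp only [Finset.mem_range]
      omega
    have hinj1 : ∀ p ∈ P1, ∀ q ∈ P1, p.1.val = q.1.val → p = q := by
      intro p hp q hq h
      simp only [hP1, Finset.mem_filter] at hp hq
      exact Prod.ext (Fin.ext h) (Fin.ext (by omega))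
    calc P1.card ≤ (Finset.range (n - 1)).card := Finset.card_le_card_of_injOn _ hmaps hinj1
      _ = n - 1 := Finset.card_range _
  have h2 : P2.card ≤ 1 := by
    apply Finset.card_le_one.mpr
    intro p hp q hq
    simp only [hP2, Finset.mem_filter] at hp hq
    exact Prod.ext (Fin.ext (by omega)) (Fin.ext (by omega))
  have h3 : P3.card ≤ n - 3 := by
    set D := P3.image (fun p : Fin n × Fin n => (p.1.val, p.2.val)) with hD
    have hinj3 : Set.InjOn (fun p : Fin n × Fin n => (p.1.val, p.2.val)) ↑P3 := by
      intro p _ q _ h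
      have h1 := congrArg Prod.fst h
      have h2 := congrArg Prod.snd h
      simp only at h1 h2
      exact Prod.ext (Fin.ext h1) (Fin.ext h2)
    have hcard3 : D.card = P3.card := Finset.card_image_of_injOn hinj3
    have hmem3 : ∀ p' ∈ D, ∃ p ∈ P3, p' = (p.1.val, p.2.val) := by
      intro p' hp'
      simp only [hD, Finset.mem_image] at hp'
      obtain ⟨p, hp, hpe⟩ := hp'
      exact ⟨p, hp, hpe.symm⟩
    rw [← hcard3]
    apply mop_diag_bound n D
    · intro p' hp'
      obtain ⟨p, hp, rfl⟩ := hmem3 p' hp'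
      simp only [hP3, Finset.mem_filter, hmemP] at hp
      obtain ⟨⟨_, hlt⟩, hne1, hne2⟩ := hp
      have := p.2.isLt
      have hltv : p.1.val < p.2.val := hlt
      exact ⟨by omega, by omega, by omega⟩
    · intro p' hp' q' hq'
      obtain ⟨p, hp, rfl⟩ := hmem3 p' hp'
      obtain ⟨q, hq, rfl⟩ := hmem3 q' hq'
      simp only [hP3, Finset.mem_filter, hmemP] at hp hq
      rintro ⟨k1, k2, k3⟩
      exact hcr p.1 q.1 p.2 q.2 (by omega) (by omega) (by omega) hp.1.1 hq.1.1
  omega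

lemma mop_exists_crossing [NeZero n] (hn : 3 ≤ n) {G : SimpleGraph (Fin n)}
    (hcr : ∀ a b c d : Fin n, a < b → b < c → c < d → G.Adj a c → ¬ G.Adj b d)
    (hcount : G.edgeSet.ncard = 2 * n - 3) (u v : Fin n) (huv : u ≠ v)
    (hadj : ¬G.Adj u v) :
    ∃ a b : Fin n, G.Adj a b ∧ 0 < (a - u).val ∧ (a - u).val < (v - u).val ∧
      (v - u).val < (b - u).val := by
  by_contra hno
  push_neg at hno
  set H := G ⊔ fromEdgeSet {s(u, v)} with hH
  have hHadj : ∀ x y : Fin n, H.Adj x y ↔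
      G.Adj x y ∨ (x = u ∧ y = v) ∨ (x = v ∧ y = u) := by
    intro x y
    rw [hH, sup_adj, fromEdgeSet_adj]
    simp only [Set.mem_singleton_iff, Sym2.eq_iff]
    constructor
    · rintro (h | ⟨(⟨rfl, rfl⟩ | ⟨rfl, rfl⟩), hne⟩)
      · exact Or.inl h
      · exact Or.inr (Or.inl ⟨rfl, rfl⟩)
      · exact Or.inr (Or.inr ⟨rfl, rfl⟩)
    · rintro (h | ⟨rfl, rfl⟩ | ⟨rfl, rfl⟩)
      · exact Or.inl h
      · exact Or.inr ⟨Or.inl ⟨rfl, rfl⟩, huv⟩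
      · exact Or.inr ⟨Or.inr ⟨rfl, rfl⟩, Ne.symm huv⟩
  have hHcr : ∀ a b c d : Fin n, a < b → b < c → c < d → H.Adj a c → ¬ H.Adj b d := by
    intro a b c d hab hbc hcd hac hbd
    have ha := a.isLt; have hb := b.isLt; have hc := c.isLt; have hd := d.isLt
    have hab' : a.val < b.val := hab
    have hbc' : b.val < c.val := hbc
    have hcd' : c.val < d.val := hcd
    rcases (hHadj a c).mp hac with hGac | ⟨rfl, rfl⟩ | ⟨rfl, rfl⟩
    · rcases (hHadj b d).mp hbd with hGbd | ⟨rfl, rfl⟩ | ⟨rfl, rfl⟩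
      · exact hcr a b c d hab hbc hcd hGac hGbd
      · -- b = u, d = v
        have s1 : 0 < (c - b).val := by rw [mop_sub_val]; split_ifs <;> omega
        have s2 : (c - b).val < (d - b).val := by
          rw [mop_sub_val, mop_sub_val]; split_ifs <;> omega
        have s3 : (d - b).val < (a - b).val := by
          rw [mop_sub_val, mop_sub_val]; split_ifs <;> omega
        have := hno c a hGac.symm s1 s2
        omega
      · -- b = v, d = u
        have s1 : 0 < (a - d).val := by rw [mop_sub_val]; split_ifs <;> omega
        have s2 : (a - d).val < (b - d).val := by
          rw [mop_sub_val, mop_sub_val]; split_ifs <;> omega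
        have s3 : (b - d).val < (c - d).val := by
          rw [mop_sub_val, mop_sub_val]; split_ifs <;> omega
        have := hno a c hGac s1 s2
        omega
    · -- a = u, c = v
      rcases (hHadj b d).mp hbd with hGbd | ⟨rfl, rfl⟩ | ⟨rfl, rfl⟩
      · have s1 : 0 < (b - a).val := by rw [mop_sub_val]; split_ifs <;> omega
        have s2 : (b - a).val < (c - a).val := by
          rw [mop_sub_val, mop_sub_val]; split_ifs <;> omega
        have s3 : (c - a).val < (d - a).val := by
          rw [mop_sub_val, mop_sub_val]; split_ifs <;> omega
        have := hno b d hGbd s1 s2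
        omega
      · omega
      · omega
    · -- a = v, c = u
      rcases (hHadj b d).mp hbd with hGbd | ⟨rfl, rfl⟩ | ⟨rfl, rfl⟩
      · have s1 : 0 < (d - c).val := by rw [mop_sub_val]; split_ifs <;> omega
        have s2 : (d - c).val < (a - c).val := by
          rw [mop_sub_val, mop_sub_val]; split_ifs <;> omega
        have s3 : (a - c).val < (b - c).val := by
          rw [mop_sub_val, mop_sub_val]; split_ifs <;> omega
        have := hno d b hGbd.symm s1 s2
        omega
      · omega
      · omega
  have hHedge : H.edgeSet = insert s(u, v) G.edgeSet := by
    rw [hH, edgeSet_sup, edgeSet_fromEdgeSet]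
    have : {s(u, v)} \ {e : Sym2 (Fin n) | e.IsDiag} = {s(u, v)} := by
      ext e
      simp only [Set.mem_diff, Set.mem_singleton_iff, Set.mem_setOf_eq]
      constructor
      · rintro ⟨h, -⟩; exact h
      · rintro rfl
        exact ⟨rfl, fun h => huv (Sym2.mk_isDiag_iff.mp h)⟩
    rw [Sym2.diagSet_eq_setOfPred_isDiag, this, Set.union_comm, Set.insert_eq]
  have hnotmem : s(u, v) ∉ G.edgeSet := by
    rw [mem_edgeSet]; exact hadj
  have hHcard : H.edgeSet.ncard = 2 * n - 3 + 1 := by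
    rw [hHedge, Set.ncard_insert_of_notMem hnotmem, hcount]
  have := mop_noncross_bound hn H hHcr
  omega

lemma mop_triangle [NeZero n] (hn : 3 ≤ n) {G : SimpleGraph (Fin n)}
    (hout : ∀ i : Fin n, G.Adj i (i + 1))
    (hcr : ∀ a b c d : Fin n, a < b → b < c → c < d → G.Adj a c → ¬ G.Adj b d)
    (hcount : G.edgeSet.ncard = 2 * n - 3) (i j : Fin n) (hij : G.Adj i j)
    (hd : 2 ≤ (j - i).val) :
    ∃ k : Fin n, 0 < (k - i).val ∧ (k - i).val < (j - i).val ∧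
      (j - k).val = (j - i).val - (k - i).val ∧ G.Adj i k ∧ G.Adj k j := by
  classical
  set d := (j - i).val with hdd
  have hdn : d < n := (j - i).isLt
  have hsub : ∀ k : Fin n, (k - i).val ≤ d → (j - k).val = d - (k - i).val := by
    intro k hk
    have hjk : j - k = (j - i) - (k - i) := by abel
    rw [hjk, mop_sub_val, if_pos hk]
  set N := Finset.univ.filter
    (fun k : Fin n => G.Adj i k ∧ 0 < (k - i).val ∧ (k - i).val < d) with hN
  have hNmem : ∀ k : Fin n, k ∈ N ↔ G.Adj i k ∧ 0 < (k - i).val ∧ (k - i).val < d := by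
    intro k; simp [hN]
  have hone : ((1 : Fin n)).val = 1 := by
    rw [Fin.val_one', Nat.mod_eq_of_lt (by omega)]
  have hNne : N.Nonempty := by
    refine ⟨i + 1, (hNmem _).mpr ⟨hout i, ?_, ?_⟩⟩
    · have : i + 1 - i = 1 := by abel
      rw [this, hone]; omega
    · have : i + 1 - i = 1 := by abel
      rw [this, hone]; omega
  obtain ⟨k, hkN, hkmax⟩ := N.exists_max_image (fun k => (k - i).val) hNne
  obtain ⟨hik, he1, he2⟩ := (hNmem k).mp hkN
  set e := (k - i).val with hee
  by_cases hkj : G.Adj k j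
  · exact ⟨k, he1, he2, hsub k (by omega), hik, hkj⟩
  exfalso
  have hkne : k ≠ j := by
    intro h
    rw [h] at hee
    omega
  obtain ⟨a, b, hab, hc1, hc2, hc3⟩ := mop_exists_crossing hn hcr hcount k j hkne hkj
  have hjk : (j - k).val = d - e := hsub k (by omega)
  rw [hjk] at hc2 hc3
  -- position of a relative to i
  have hai : a - i = (a - k) + (k - i) := by abel
  have hα : (a - i).val = (a - k).val + e := by
    rw [hai, mop_add_val, if_pos (by omega)]
  -- position of b relative to i
  have hbi : b - i = (b - k) + (k - i) := by abel
  have hbv := (b - k).isLt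
  have hβ := mop_add_val (b - k) (k - i)
  rw [← hbi] at hβ
  rcases lt_or_ge ((b - k).val + e) n with hcase | hcase
  · -- no wrap: b strictly beyond j
    rw [if_pos hcase] at hβ
    exact mop_cyc_cross hcr i a j b (by omega) (by omega) (by omega) hij hab
  · rw [if_neg (by omega)] at hβ
    rcases Nat.eq_zero_or_pos (b - i).val with hb0 | hbpos
    · -- b = i : contradicts maximality of k
      have hbeq : b = i := (mop_sub_val_zero_iff b i).mp hb0
      subst hbeq
      have haN : a ∈ N := (hNmem a).mpr ⟨hab.symm, by omega, by omega⟩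
      have := hkmax a haN
      omega
    · -- b strictly between i and k
      exact mop_cyc_cross hcr i b k a (by omega) (by omega) (by omega) hik hab.symm

end MopAux

theorem mop_exists_partition_diagonal {n : ℕ} [NeZero n] (G : SimpleGraph (Fin n))
    (hn : 6 ≤ n) (hG : IsMop G) :
    ∃ i j : Fin n, G.Adj i j ∧
      ((j - i).val = 4 ∨ (j - i).val = 5 ∨ (j - i).val = 6) := by
  obtain ⟨hout, hcr, hcount⟩ := hG
  have hn3 : 3 ≤ n := by omega
  set S : Set ℕ := {d : ℕ | 4 ≤ d ∧ ∃ p q : Fin n, G.Adj p q ∧ (q - p).val = d} with hS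
  have hSmem : ∀ d : ℕ, d ∈ S ↔ 4 ≤ d ∧ ∃ p q : Fin n, G.Adj p q ∧ (q - p).val = d := by
    intro d; rw [hS]; rfl
  have hne : S.Nonempty := by
    set u0 : Fin n := ⟨0, by omega⟩ with hu0
    set v4 : Fin n := ⟨4, by omega⟩ with hv4
    have hval04 : (v4 - u0).val = 4 := by
      rw [mop_sub_val, hu0, hv4]
      simp only [Fin.val_mk]
      norm_num
    by_cases h04 : G.Adj u0 v4
    · exact ⟨4, (hSmem 4).mpr ⟨by omega, u0, v4, h04, hval04⟩⟩
    · have hne04 : u0 ≠ v4 := by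
        intro h
        have := congrArg Fin.val h
        rw [hu0, hv4] at this
        simp only [Fin.val_mk] at this
        omega
      obtain ⟨a, b, hab, hc1, hc2, hc3⟩ :=
        mop_exists_crossing hn3 hcr hcount u0 v4 hne04 h04
      rw [hval04] at hc2 hc3
      have ha0 : (a - u0).val = a.val := by
        rw [mop_sub_val, hu0]
        simp only [Fin.val_mk]
        rw [if_pos (Nat.zero_le _)]
        omega
      have hb0 : (b - u0).val = b.val := by
        rw [mop_sub_val, hu0]
        simp only [Fin.val_mk]
        rw [if_pos (Nat.zero_le _)]
        omega
      rw [ha0] at hc1 hc2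
      rw [hb0] at hc3
      have halt := a.isLt; have hblt := b.isLt
      have hδ : (b - a).val = b.val - a.val := by
        rw [mop_sub_val, if_pos (by omega)]
      have hδ' : (a - b).val = a.val + n - b.val := by
        rw [mop_sub_val, if_neg (by omega)]
      rcases le_or_gt 4 (b.val - a.val) with h4 | h4
      · exact ⟨(b - a).val, (hSmem _).mpr ⟨by omega, a, b, hab, rfl⟩⟩
      rcases le_or_gt 4 (a.val + n - b.val) with h4' | h4'
      · exact ⟨(a - b).val, (hSmem _).mpr ⟨by omega, b, a, hab.symm, rfl⟩⟩
      -- n = 6, a.val = 2, b.val = 5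
      have hn6 : n = 6 := by omega
      have ha2 : a.val = 2 := by omega
      have hb5 : b.val = 5 := by omega
      set u1 : Fin n := ⟨1, by omega⟩ with hu1
      set v5 : Fin n := ⟨5, by omega⟩ with hv5
      have hval15 : (v5 - u1).val = 4 := by
        rw [mop_sub_val, hu1, hv5]
        simp only [Fin.val_mk]
        norm_num
      by_cases h15 : G.Adj u1 v5
      · exact ⟨4, (hSmem 4).mpr ⟨by omega, u1, v5, h15, hval15⟩⟩
      · have hne15 : u1 ≠ v5 := by
          intro h
          have := congrArg Fin.val h
          rw [hu1, hv5] at this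
          simp only [Fin.val_mk] at this
          omega
        obtain ⟨a', b', hab', hd1, hd2, hd3⟩ :=
          mop_exists_crossing hn3 hcr hcount u1 v5 hne15 h15
        rw [hval15] at hd2 hd3
        have e2 := mop_sub_val a' u1
        have e3 := mop_sub_val b' u1
        rw [hu1] at e2 e3
        simp only [Fin.val_mk] at e2 e3
        have ha'lt := a'.isLt; have hb'lt := b'.isLt
        have ha'range : 2 ≤ a'.val ∧ a'.val ≤ 4 := by
          rw [e2] at hd1 hd2
          split_ifs at hd1 hd2 <;> omega
        have hb'0 : b'.val = 0 := by
          rw [e3] at hd3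
          split_ifs at hd3 <;> omega
        rcases (by omega : a'.val = 2 ∨ a'.val = 3 ∨ a'.val = 4) with h2' | h3' | h4''
        · refine ⟨(b' - a').val, (hSmem _).mpr ⟨?_, a', b', hab', rfl⟩⟩
          rw [mop_sub_val, if_neg (by omega)]
          omega
        · -- edges {b'(0), a'(3)} and {a(2), b(5)} cross
          exact absurd hab (hcr b' a a' b (by omega) (by omega) (by omega) hab'.symm)
        · refine ⟨(a' - b').val, (hSmem _).mpr ⟨?_, b', a', hab'.symm, rfl⟩⟩
          rw [mop_sub_val, if_pos (by omega)]
          omega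
  obtain ⟨hd4, p, q, hpq, hdval⟩ := (hSmem _).mp (Nat.sInf_mem hne)
  rcases le_or_gt (sInf S) 6 with hle | hgt
  · exact ⟨p, q, hpq, by omega⟩
  exfalso
  obtain ⟨k, hk1, hk2, hk3, hik, hkj⟩ :=
    mop_triangle hn3 hout hcr hcount p q hpq (by omega)
  rcases le_or_gt 4 ((k - p).val) with h4 | h4
  · have hmem : (k - p).val ∈ S := (hSmem _).mpr ⟨h4, p, k, hik, rfl⟩
    have := Nat.sInf_le hmem
    omega
  · have h4' : 4 ≤ (q - k).val := by omega
    have hmem : (q - k).val ∈ S := (hSmem _).mpr ⟨h4', k, q, hkj, rfl⟩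
    have := Nat.sInf_le hmem
    omega
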